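/- Let δ ∈ (0,1), θ = (1 − √(1−(1−δ)²))/(1 + √(1−(1−δ)²)), and η̃ ∈ [(1+θ)/2, 1). Then for every x ∈ [0, 1−δ]: x²(1+η̃)² − 4η̃ < 0. -/
import Mathlib


/-- Negativity of the discriminant: for δ ∈ (0,1), θ as in loopless Chebyshev
acceleration and η̃ ∈ [(1+θ)/2, 1), every x ∈ [0, 1−δ] satisfies
x²(1+η̃)² − 4η̃ < 0. -/
theorem stmt11 (δ θ ηt : ℝ) (h0 : 0 < δ) (h1 : δ < 1)
    (hθ : θ = (1 - Real.sqrt (1 - (1 - δ) ^ 2)) / (1 + Real.sqrt (1 - (1 - δ) ^ 2)))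
    (hη1 : (1 + θ) / 2 ≤ ηt) (hη2 : ηt < 1) :
    ∀ x : ℝ, 0 ≤ x → x ≤ 1 - δ → x ^ 2 * (1 + ηt) ^ 2 - 4 * ηt < 0 := by
  intro x hx hx'
  set s := Real.sqrt (1 - (1 - δ) ^ 2) with hs
  have harg : (0:ℝ) < 1 - (1 - δ) ^ 2 := by nlinarith
  have hs0 : 0 < s := Real.sqrt_pos.mpr harg
  have hs2 : s ^ 2 = 1 - (1 - δ) ^ 2 := Real.sq_sqrt harg.le
  have hs1 : s < 1 := by nlinarith [hs2, hs0]
  have h1s : (0:ℝ) < 1 + s := by linarith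
  have hθ' : θ * (1 + s) = 1 - s := by
    rw [hθ]; field_simp
  have hθlt : θ < 1 := by nlinarith
  have hθpos : 0 < θ := by nlinarith
  have hηθ : θ < ηt := by linarith
  nlinarith [sq_nonneg x, sq_nonneg (1 - δ - x), mul_pos (sub_pos.mpr hηθ) (sub_pos.mpr hη2),
    mul_pos hs0 (mul_pos (sub_pos.mpr hηθ) (sub_pos.mpr hη2)),
    mul_nonneg hx (sub_nonneg.mpr hx'), sq_nonneg (ηt - θ), sq_nonneg s, hs2,
    mul_pos hθpos (sub_pos.mpr hη2)]
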